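/- Let X be an invertible real n×n matrix and Q an invertible real n×n matrix. Then for every k = 1,...,n: ∏_{i=1}^k σ_i^o(XQ) ≤ ∏_{i=1}^k σ_i^o(X)·σ_i^o(Q) and ∏_{i=1}^k σ_i^o(X) ≤ ∏_{i=1}^k σ_i^o(XQ)·σ_i^o(Q⁻¹), where σ_i^o denote singular values in decreasing order. -/

import Mathlib

open Matrix Filter

/-- The k-th largest singular value (0-indexed) of a real square matrix:
square roots of the eigenvalues of `Xᵀ * X`, sorted in decreasing order. -/
noncomputable def svalDesc {n : ℕ} (X : Matrix (Fin n) (Fin n) ℝ) (k : Fin n) : ℝ :=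
  Real.sqrt (((Matrix.isHermitian_conjTranspose_mul_self X).eigenvalues ∘
    Tuple.sort ((Matrix.isHermitian_conjTranspose_mul_self X).eigenvalues)) k.rev)

/-- Euclidean norm of the j-th column of X. -/
noncomputable def colNorm {n : ℕ} (X : Matrix (Fin n) (Fin n) ℝ) (j : Fin n) : ℝ :=
  Real.sqrt (∑ i, (X i j) ^ 2)

namespace HornAux

open Finset Equiv

set_option linter.unusedSectionVars false

variable {n m : ℕ}

abbrev SubK (n m : ℕ) := {s : Finset (Fin n) // s.card = m}
noncomputable def emb (S : SubK n m) : Fin m ↪o Fin n := S.1.orderEmbOfFin S.2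

theorem image_emb_perm (S : SubK n m) (π : Equiv.Perm (Fin m)) :
    Finset.image (fun i => emb S (π i)) Finset.univ = S.1 := by
  ext x
  simp only [Finset.mem_image, Finset.mem_univ, true_and]
  constructor
  · rintro ⟨i, rfl⟩
    exact Finset.orderEmbOfFin_mem _ _ _
  · intro hx
    have : x ∈ Set.range (emb S) := by
      rw [emb, Finset.range_orderEmbOfFin]; exact hx
    obtain ⟨j, hj⟩ := this
    exact ⟨π.symm j, by simpa using hj⟩

theorem cauchyBinet (A : Matrix (Fin m) (Fin n) ℝ) (B : Matrix (Fin n) (Fin m) ℝ) :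
    (A * B).det = ∑ S : SubK n m,
      (A.submatrix id (emb S)).det * (B.submatrix (emb S) id).det := by
  classical
  -- Step 1: expand multilinearly in rows
  have h1 : (A * B).det
      = ∑ f : Fin m → Fin n, (∏ i, A i (f i)) * (B.submatrix f id).det := by
    have hrow : (A * B) = Matrix.of (fun i => ∑ x : Fin n, A i x • B x) := by
      ext i j
      simp [Matrix.mul_apply]
    have e0 : (A * B).det
        = Matrix.detRowAlternating (Matrix.of fun i => ∑ x : Fin n, A i x • B x) := by
      rw [hrow]; rfl
    have hms := (Matrix.detRowAlternating (n := Fin m) (R := ℝ)).toMultilinearMap.map_sum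
      (g := fun i (x : Fin n) => A i x • B x)
    rw [e0]
    show (Matrix.detRowAlternating (n := Fin m) (R := ℝ)).toMultilinearMap
      (fun i => ∑ x : Fin n, A i x • B x) = _
    rw [hms]
    refine Finset.sum_congr rfl fun f _ => ?_
    rw [(Matrix.detRowAlternating (n := Fin m) (R := ℝ)).toMultilinearMap.map_smul_univ
      (fun i => A i (f i)) (fun i => B (f i))]
    rfl
  -- Step 2: non-injective terms vanish
  have h2 : ∀ f : Fin m → Fin n, ¬ Function.Injective f →
      (∏ i, A i (f i)) * (B.submatrix f id).det = 0 := by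
    intro f hf
    obtain ⟨i, j, hfij, hij⟩ := Function.not_injective_iff.mp hf
    have : (B.submatrix f id).det = 0 :=
      Matrix.det_zero_of_row_eq hij (by funext t; simp [Matrix.submatrix_apply, hfij])
    rw [this, mul_zero]
  have h3 : (A * B).det = ∑ f ∈ Finset.univ.filter (fun f : Fin m → Fin n => Function.Injective f),
      (∏ i, A i (f i)) * (B.submatrix f id).det := by
    rw [h1]
    exact (Finset.sum_filter_of_ne (fun f _ hne => by_contra fun h => hne (h2 f h))).symm
  -- Step 3: reindex injective functions by pairs (subset, permutation)
  have h4 : ∑ f ∈ Finset.univ.filter (fun f : Fin m → Fin n => Function.Injective f),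
      (∏ i, A i (f i)) * (B.submatrix f id).det
      = ∑ p : SubK n m × Equiv.Perm (Fin m),
        (∏ i, A i (emb p.1 (p.2 i))) * (B.submatrix (fun i => emb p.1 (p.2 i)) id).det := by
    refine (Finset.sum_bij (fun (p : SubK n m × Equiv.Perm (Fin m)) _
        => (fun i => emb p.1 (p.2 i) : Fin m → Fin n)) ?_ ?_ ?_ ?_).symm
    · intro p _
      simp only [Finset.mem_filter, Finset.mem_univ, true_and]
      exact fun a b hab => p.2.injective ((emb p.1).injective hab)
    · rintro ⟨S, π⟩ _ ⟨S', π'⟩ _ h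
      have h' : (fun i => emb S (π i)) = (fun i => emb S' (π' i)) := h
      have hS : S = S' := by
        apply Subtype.ext
        rw [← image_emb_perm S π, ← image_emb_perm S' π', h']
      subst hS
      have hππ : π = π' := by
        ext i
        have := (emb S).injective (congrFun h' i)
        exact congrArg Fin.val this
      rw [hππ]
    · intro f hf
      rw [Finset.mem_filter] at hf
      obtain ⟨-, hf⟩ := hf
      set S : SubK n m := ⟨Finset.univ.image f, by
        rw [Finset.card_image_of_injective _ hf, Finset.card_univ, Fintype.card_fin]⟩ with hSdef
      have hmem : ∀ i, f i ∈ S.1 := fun i => Finset.mem_image_of_mem f (Finset.mem_univ i)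
      set π0 : Fin m → Fin m := fun i => (S.1.orderIsoOfFin S.2).symm ⟨f i, hmem i⟩ with hπ0
      have hπ0inj : Function.Injective π0 := by
        intro a b hab
        have := (S.1.orderIsoOfFin S.2).symm.injective hab
        exact hf (congrArg Subtype.val this)
      have hπ0bij : Function.Bijective π0 := Finite.injective_iff_bijective.mp hπ0inj
      refine ⟨⟨S, Equiv.ofBijective π0 hπ0bij⟩, Finset.mem_univ _, ?_⟩
      funext i
      show emb S (π0 i) = f i
      rw [emb, hπ0]
      rw [← Finset.coe_orderIsoOfFin_apply]
      rw [OrderIso.apply_symm_apply]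
    · intro p _
      rfl
  -- Step 4: sum over permutations for a fixed subset
  rw [h3, h4, Fintype.sum_prod_type]
  refine Finset.sum_congr rfl fun S _ => ?_
  have key : ∀ π : Equiv.Perm (Fin m),
      (B.submatrix (fun i => emb S (π i)) id).det
        = (Equiv.Perm.sign π : ℝ) * (B.submatrix (emb S) id).det := by
    intro π
    have : (B.submatrix (fun i => emb S (π i)) id)
        = (B.submatrix (emb S) id).submatrix π id := rfl
    rw [this, Matrix.det_permute]
  calc ∑ π : Equiv.Perm (Fin m),
        (∏ i, A i (emb S (π i))) * (B.submatrix (fun i => emb S (π i)) id).det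
      = (∑ π : Equiv.Perm (Fin m), (Equiv.Perm.sign π : ℝ) * ∏ i, A i (emb S (π i)))
          * (B.submatrix (emb S) id).det := by
        rw [Finset.sum_mul]
        exact Finset.sum_congr rfl fun π _ => by rw [key π]; ring
    _ = (A.submatrix id (emb S)).det * (B.submatrix (emb S) id).det := by
        congr 1
        rw [← Matrix.det_transpose (A.submatrix id (emb S)), Matrix.det_apply']
        refine Finset.sum_congr rfl fun π _ => ?_
        congr 1

noncomputable def cpd (m : ℕ) (A : Matrix (Fin n) (Fin n) ℝ) : Matrix (SubK n m) (SubK n m) ℝ :=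
  fun S T => (A.submatrix (emb S) (emb T)).det

theorem cpd_mul (A B : Matrix (Fin n) (Fin n) ℝ) :
    cpd m (A * B) = cpd m A * cpd m B := by
  funext S T
  have h : (A * B).submatrix (emb S) (emb T)
      = (A.submatrix (emb S) id) * (B.submatrix id (emb T)) := by
    have := Matrix.submatrix_mul_equiv A B (⇑(emb S)) (Equiv.refl (Fin n)) (⇑(emb T))
    simpa using this.symm
  show ((A * B).submatrix (emb S) (emb T)).det = _
  rw [h, cauchyBinet]
  simp [Matrix.mul_apply, cpd, Matrix.submatrix_submatrix]

theorem cpd_transpose (A : Matrix (Fin n) (Fin n) ℝ) :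
    cpd m Aᵀ = (cpd m A)ᵀ := by
  funext S T
  show (Aᵀ.submatrix (emb S) (emb T)).det = (A.submatrix (emb T) (emb S)).det
  rw [← Matrix.transpose_submatrix, Matrix.det_transpose]

/-- if S ≠ T have same card, some element of S is not in T -/
theorem exists_mem_not_mem {S T : SubK n m} (h : S ≠ T) : ∃ a, a ∈ S.1 ∧ a ∉ T.1 := by
  by_contra hc
  push_neg at hc
  exact h (Subtype.ext (Finset.eq_of_subset_of_card_le hc (T.2.trans S.2.symm).le))

theorem det_submatrix_eq_zero {S T : SubK n m} (h : S ≠ T) (M : Matrix (Fin n) (Fin n) ℝ)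
    (hM : ∀ i j, i ≠ j → M i j = 0) : (M.submatrix (emb S) (emb T)).det = 0 := by
  obtain ⟨a, haS, haT⟩ := exists_mem_not_mem h
  have : a ∈ Set.range (emb S) := by rw [emb, Finset.range_orderEmbOfFin]; exact haS
  obtain ⟨i₀, hi₀⟩ := this
  apply Matrix.det_eq_zero_of_row_eq_zero i₀
  intro j
  have : emb S i₀ ≠ emb T j := by
    intro hEq
    exact haT (by rw [← hi₀, hEq]; exact Finset.orderEmbOfFin_mem _ _ _)
  exact hM _ _ this

theorem cpd_one : cpd m (1 : Matrix (Fin n) (Fin n) ℝ) = 1 := by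
  funext S T
  by_cases hST : S = T
  · subst hST
    show ((1 : Matrix (Fin n) (Fin n) ℝ).submatrix (emb S) (emb S)).det = (1 : Matrix (SubK n m) (SubK n m) ℝ) S S
    have : (1 : Matrix (Fin n) (Fin n) ℝ).submatrix (emb S) (emb S) = 1 := by
      funext i j
      simp [Matrix.one_apply, (emb S).injective.eq_iff]
    rw [this, Matrix.det_one, Matrix.one_apply_eq]
  · show ((1 : Matrix (Fin n) (Fin n) ℝ).submatrix (emb S) (emb T)).det = (1 : Matrix (SubK n m) (SubK n m) ℝ) S T
    rw [Matrix.one_apply_ne hST]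
    exact det_submatrix_eq_zero hST _ (fun i j hij => Matrix.one_apply_ne hij)

theorem cpd_diagonal (d : Fin n → ℝ) :
    cpd m (Matrix.diagonal d) = Matrix.diagonal (fun S : SubK n m => ∏ i ∈ S.1, d i) := by
  funext S T
  by_cases hST : S = T
  · subst hST
    show ((Matrix.diagonal d).submatrix (emb S) (emb S)).det = _
    have h1 : (Matrix.diagonal d).submatrix (emb S) (emb S)
        = Matrix.diagonal (fun i => d (emb S i)) := by
      funext i j
      by_cases hij : i = j
      · subst hij; simp [Matrix.diagonal_apply_eq]
      · rw [Matrix.submatrix_apply, Matrix.diagonal_apply_ne _ (fun hEq => hij ((emb S).injective hEq)),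
          Matrix.diagonal_apply_ne _ hij]
    rw [h1, Matrix.det_diagonal, Matrix.diagonal_apply_eq]
    rw [← image_emb_perm S (Equiv.refl (Fin m)), Finset.prod_image
      (fun a _ b _ hab => (Equiv.refl (Fin m)).injective ((emb S).injective hab))]
    rfl
  · show ((Matrix.diagonal d).submatrix (emb S) (emb T)).det = _
    rw [Matrix.diagonal_apply_ne _ hST]
    exact det_submatrix_eq_zero hST _ (fun i j hij => Matrix.diagonal_apply_ne _ hij)

theorem orderEmbOfFin_le_aux (s : Finset (Fin n)) (h : s.card = m) (j : Fin m) :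
    (s.orderEmbOfFin h j : ℕ) ≤ n - m + j := by
  have hcard : (Finset.Ici j).card ≤ (Finset.Ici (s.orderEmbOfFin h j)).card :=
    Finset.card_le_card_of_injOn (s.orderEmbOfFin h)
      (fun a ha => Finset.mem_Ici.mpr ((s.orderEmbOfFin h).monotone (Finset.mem_Ici.mp ha)))
      ((s.orderEmbOfFin h).injective.injOn)
  rw [Fin.card_Ici, Fin.card_Ici] at hcard
  have h1 : (j : ℕ) < m := j.2
  have h2 : ((s.orderEmbOfFin h j) : ℕ) < n := (s.orderEmbOfFin h j).2
  omega

theorem prod_Iic_rev (g : Fin n → ℝ) (k : Fin n) :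
    ∏ i ∈ Finset.Iic k, g i.rev
      = ∏ j : Fin (k.val + 1), g ⟨n - (k.val + 1) + j.val, by have := k.isLt; have := j.isLt; omega⟩ := by
  have hk := k.isLt
  refine Finset.prod_bij' (fun (a : Fin n) _ => (⟨k.val - a.val, by omega⟩ : Fin (k.val + 1)))
    (fun (b : Fin (k.val + 1)) _ => (⟨k.val - b.val, by omega⟩ : Fin n))
    ?_ ?_ ?_ ?_ ?_
  · intro a _; exact Finset.mem_univ _
  · intro b _
    refine Finset.mem_Iic.mpr ?_
    rw [Fin.le_def]
    simp only [Fin.val_mk]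
    omega
  · intro a ha
    have ha' : a ≤ k := Finset.mem_Iic.mp ha
    have ha'' : a.val ≤ k.val := ha'
    apply Fin.ext
    simp only [Fin.val_mk]
    omega
  · intro b _
    have hb : b.val < k.val + 1 := b.isLt
    apply Fin.ext
    simp only [Fin.val_mk]
    omega
  · intro a ha
    have ha' : a ≤ k := Finset.mem_Iic.mp ha
    have ha'' : a.val ≤ k.val := ha'
    congr 1
    apply Fin.ext
    rw [Fin.val_rev]
    simp only [Fin.val_mk]
    omega

theorem prod_le_top (g : Fin n → ℝ) (hg : Monotone g) (hpos : ∀ i, 0 < g i)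
    (k : Fin n) (s : Finset (Fin n)) (hs : s.card = k.val + 1) :
    ∏ i ∈ s, g i ≤ ∏ i ∈ Finset.Iic k, g i.rev := by
  have h1 : ∏ i ∈ s, g i = ∏ j : Fin (k.val + 1), g (s.orderEmbOfFin hs j) := by
    conv_lhs => rw [show s = (⟨s, hs⟩ : SubK n (k.val+1)).1 from rfl,
      ← image_emb_perm ⟨s, hs⟩ (Equiv.refl (Fin (k.val+1)))]
    rw [Finset.prod_image (fun a _ b _ hab => (Equiv.refl (Fin (k.val+1))).injective
      ((emb (⟨s, hs⟩ : SubK n (k.val+1))).injective hab))]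
    rfl
  rw [h1, prod_Iic_rev g k]
  refine Finset.prod_le_prod (fun j _ => (hpos _).le) (fun j _ => hg ?_)
  rw [Fin.le_def]
  exact orderEmbOfFin_le_aux s hs j

theorem top_eq_prod_subset (μ : Fin n → ℝ) (k : Fin n) :
    ∃ s : Finset (Fin n), s.card = k.val + 1 ∧
      ∏ i ∈ Finset.Iic k, (μ ∘ Tuple.sort μ) i.rev = ∏ i ∈ s, μ i := by
  refine ⟨(Finset.Iic k).image (fun i => Tuple.sort μ i.rev), ?_, ?_⟩
  · rw [Finset.card_image_of_injective _
      (fun a b hab => Fin.rev_injective ((Tuple.sort μ).injective hab)), Fin.card_Iic]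
  · rw [Finset.prod_image (fun a _ b _ hab =>
      Fin.rev_injective ((Tuple.sort μ).injective hab))]
    rfl

theorem perm_prod_subset (μ : Fin n → ℝ) (σ : Equiv.Perm (Fin n)) (s : Finset (Fin n)) :
    ∏ i ∈ s, μ i = ∏ j ∈ s.image σ.symm, (μ ∘ σ) j := by
  rw [Finset.prod_image (fun a _ b _ hab => σ.symm.injective hab)]
  simp

theorem sqrt_prod {α : Type*} (s : Finset α) (f : α → ℝ) (hf : ∀ i ∈ s, 0 ≤ f i) :
    ∏ i ∈ s, Real.sqrt (f i) = Real.sqrt (∏ i ∈ s, f i) := by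
  classical
  induction s using Finset.cons_induction with
  | empty => simp
  | cons a s ha ih =>
    rw [Finset.prod_cons, Finset.prod_cons, ih (fun i hi => hf i (Finset.mem_cons_of_mem hi)),
      Real.sqrt_mul (hf a (Finset.mem_cons_self a s))]

section Rayleigh

variable {ι : Type*} [Fintype ι] [DecidableEq ι]

theorem dot_conj (M : Matrix ι ι ℝ) (x : ι → ℝ) (w : ι → ℝ) :
    x ⬝ᵥ (Mᵀ *ᵥ w) = (M *ᵥ x) ⬝ᵥ w := by
  rw [Matrix.dotProduct_mulVec, Matrix.vecMul_transpose]

theorem rayleigh_upper (U : Matrix ι ι ℝ) (hU : U * Uᵀ = 1) (d : ι → ℝ) (a : ℝ)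
    (hd : ∀ i, d i ≤ a) (x : ι → ℝ) :
    x ⬝ᵥ (U * Matrix.diagonal d * Uᵀ) *ᵥ x ≤ a * (x ⬝ᵥ x) := by
  set y : ι → ℝ := Uᵀ *ᵥ x with hy
  have h1 : (U * Matrix.diagonal d * Uᵀ) *ᵥ x = U *ᵥ (Matrix.diagonal d *ᵥ y) := by
    rw [hy, Matrix.mulVec_mulVec, Matrix.mulVec_mulVec, Matrix.mul_assoc]
  have h2 : x ⬝ᵥ (U *ᵥ (Matrix.diagonal d *ᵥ y)) = y ⬝ᵥ (Matrix.diagonal d *ᵥ y) := by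
    have := dot_conj Uᵀ x (Matrix.diagonal d *ᵥ y)
    rw [Matrix.transpose_transpose] at this
    rw [← this, hy]
  have h3 : y ⬝ᵥ (Matrix.diagonal d *ᵥ y) ≤ a * (y ⬝ᵥ y) := by
    rw [dotProduct, dotProduct, Finset.mul_sum]
    refine Finset.sum_le_sum fun i _ => ?_
    rw [Matrix.mulVec_diagonal]
    have : y i * (d i * y i) = d i * (y i * y i) := by ring
    rw [this]
    exact mul_le_mul_of_nonneg_right (hd i) (mul_self_nonneg _)
  have h4 : y ⬝ᵥ y = x ⬝ᵥ x := by
    rw [hy]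
    have := dot_conj Uᵀ x (Uᵀ *ᵥ x)
    rw [Matrix.transpose_transpose] at this
    rw [← this, Matrix.mulVec_mulVec, hU, Matrix.one_mulVec]
  rw [h1, h2, ← h4]
  exact h3

theorem rayleigh_eigen (U : Matrix ι ι ℝ) (hU : U * Uᵀ = 1) (d : ι → ℝ) (i₀ : ι) :
    ∃ x : ι → ℝ, x ⬝ᵥ x = 1 ∧ (U * Matrix.diagonal d * Uᵀ) *ᵥ x = d i₀ • x := by
  have hU' : Uᵀ * U = 1 := mul_eq_one_comm.mp hU
  refine ⟨U *ᵥ Pi.single i₀ 1, ?_, ?_⟩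
  · have h1 : (U *ᵥ Pi.single i₀ 1) ⬝ᵥ (U *ᵥ Pi.single i₀ 1)
        = Pi.single i₀ 1 ⬝ᵥ ((Uᵀ * U) *ᵥ Pi.single i₀ 1) := by
      rw [← Matrix.mulVec_mulVec, dot_conj U]
    rw [h1, hU', Matrix.one_mulVec]
    simp [dotProduct, Pi.single_apply]
  · rw [Matrix.mulVec_mulVec, Matrix.mul_assoc (U * Matrix.diagonal d) Uᵀ U, hU',
      Matrix.mul_one, ← Matrix.mulVec_mulVec, Matrix.diagonal_mulVec_single,
      ← Matrix.mulVec_smul]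
    have hsingle : Pi.single i₀ (d i₀ * 1) = d i₀ • (Pi.single i₀ 1 : ι → ℝ) := by
      funext j
      by_cases hj : j = i₀
      · subst hj; simp
      · simp [Pi.single_apply, hj]
    rw [hsingle]

end Rayleigh

theorem posDef_tmul (M : Matrix (Fin n) (Fin n) ℝ) (hM : IsUnit M.det) :
    (Mᵀ * M).PosDef := by
  refine Matrix.PosDef.of_dotProduct_mulVec_pos (Matrix.isHermitian_conjTranspose_mul_self M) (fun x hx => ?_)
  have hstar : (star x : Fin n → ℝ) = x := by
    funext i; simp
  rw [hstar, ← Matrix.mulVec_mulVec, dot_conj]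
  have hMx : M *ᵥ x ≠ 0 := by
    intro h0
    apply hx
    have := congrArg (fun v => M⁻¹ *ᵥ v) h0
    simpa [Matrix.mulVec_mulVec, Matrix.nonsing_inv_mul M hM] using this
  have h1 : (M *ᵥ x) ⬝ᵥ (M *ᵥ x) ≠ 0 := fun h => hMx (dotProduct_self_eq_zero.mp h)
  have h2 : 0 ≤ (M *ᵥ x) ⬝ᵥ (M *ᵥ x) := Finset.sum_nonneg fun i _ => mul_self_nonneg _
  exact lt_of_le_of_ne h2 (Ne.symm h1)

theorem real_spectral (N : Matrix (Fin n) (Fin n) ℝ) (hN : N.IsHermitian) :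
    ∃ U : Matrix (Fin n) (Fin n) ℝ, U * Uᵀ = 1 ∧
      N = U * Matrix.diagonal hN.eigenvalues * Uᵀ := by
  refine ⟨(hN.eigenvectorUnitary : Matrix (Fin n) (Fin n) ℝ), ?_, ?_⟩
  · have := (Matrix.mem_unitaryGroup_iff).mp hN.eigenvectorUnitary.2
    rwa [Matrix.star_eq_conjTranspose, Matrix.conjTranspose_eq_transpose_of_trivial] at this
  · have hst := hN.spectral_theorem
    rw [Unitary.conjStarAlgAut_apply, Matrix.star_eq_conjTranspose, Matrix.conjTranspose_eq_transpose_of_trivial] at hst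
    exact hst

theorem spectral_package (M : Matrix (Fin n) (Fin n) ℝ) (hM : IsUnit M.det) (k : Fin n) :
    ∃ P : ℝ, 0 < P ∧
      (∏ i ∈ Finset.Iic k, svalDesc M i = Real.sqrt P) ∧
      (∀ x : SubK n (k.val+1) → ℝ,
        x ⬝ᵥ (cpd (k.val+1) (Mᵀ * M)) *ᵥ x ≤ P * (x ⬝ᵥ x)) ∧
      (∃ x : SubK n (k.val+1) → ℝ, x ⬝ᵥ x = 1 ∧
        cpd (k.val+1) (Mᵀ * M) *ᵥ x = P • x) := by
  classical
  set μ : Fin n → ℝ := (Matrix.isHermitian_conjTranspose_mul_self M).eigenvalues with hμ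
  have hposμ : ∀ i, 0 < μ i := fun i => (posDef_tmul M hM).eigenvalues_pos i
  set g : Fin n → ℝ := μ ∘ ⇑(Tuple.sort μ) with hgdef
  have hg : Monotone g := Tuple.monotone_sort μ
  have gpos : ∀ i, 0 < g i := fun i => hposμ _
  set P : ℝ := ∏ i ∈ Finset.Iic k, g i.rev with hP
  have hPpos : 0 < P := Finset.prod_pos fun i _ => gpos _
  refine ⟨P, hPpos, ?_, ?_, ?_⟩
  · have : ∏ i ∈ Finset.Iic k, svalDesc M i
        = ∏ i ∈ Finset.Iic k, Real.sqrt (g i.rev) := rfl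
    rw [this, sqrt_prod _ _ (fun i _ => (gpos _).le)]
  all_goals {
    obtain ⟨U, hU, hN⟩ := real_spectral (Mᴴ * M) (Matrix.isHermitian_conjTranspose_mul_self M)
    set W : Matrix (SubK n (k.val+1)) (SubK n (k.val+1)) ℝ := cpd (k.val+1) U with hW
    have hcpdN : cpd (k.val+1) (Mᵀ * M)
        = W * Matrix.diagonal (fun S : SubK n (k.val+1) => ∏ i ∈ S.1, μ i) * Wᵀ := by
      rw [show Mᵀ * M = Mᴴ * M from rfl, hN, cpd_mul, cpd_mul, cpd_diagonal, cpd_transpose]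
    have hWWt : W * Wᵀ = 1 := by
      rw [hW, ← cpd_transpose, ← cpd_mul, hU, cpd_one]
    -- upper bound for any subset product
    have hany : ∀ S : SubK n (k.val+1), ∏ i ∈ S.1, μ i ≤ P := by
      intro S
      have himg : (S.1.image ⇑(Tuple.sort μ).symm).card = k.val + 1 := by
        rw [Finset.card_image_of_injective _ (Tuple.sort μ).symm.injective, S.2]
      calc ∏ i ∈ S.1, μ i = ∏ j ∈ S.1.image ⇑(Tuple.sort μ).symm, g j :=
            perm_prod_subset μ (Tuple.sort μ) S.1
        _ ≤ P := prod_le_top g hg gpos k _ himg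
    first
    | · -- the Rayleigh upper bound
        intro x
        rw [hcpdN]
        exact rayleigh_upper W hWWt _ P hany x
    | · -- the eigenvector
        obtain ⟨s, hs, hPs⟩ := top_eq_prod_subset μ k
        obtain ⟨x, hx1, hx2⟩ := rayleigh_eigen W hWWt
          (fun S : SubK n (k.val+1) => ∏ i ∈ S.1, μ i) ⟨s, hs⟩
        refine ⟨x, hx1, ?_⟩
        rw [hcpdN, hx2]
        congr 1
        exact (hPs.symm : _)
  }

theorem master (A B : Matrix (Fin n) (Fin n) ℝ)
    (hA : IsUnit A.det) (hB : IsUnit B.det) (k : Fin n) :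
    ∏ i ∈ Finset.Iic k, svalDesc (A * B) i ≤
      (∏ i ∈ Finset.Iic k, svalDesc A i) * ∏ i ∈ Finset.Iic k, svalDesc B i := by
  classical
  have hAB : IsUnit (A * B).det := by rw [Matrix.det_mul]; exact hA.mul hB
  obtain ⟨a, hapos, haP, haUp, -⟩ := spectral_package A hA k
  obtain ⟨b, hbpos, hbP, hbUp, -⟩ := spectral_package B hB k
  obtain ⟨c, hcpos, hcP, -, hcEig⟩ := spectral_package (A * B) hAB k
  obtain ⟨z, hz1, hz2⟩ := hcEig
  have hfact : cpd (k.val+1) ((A * B)ᵀ * (A * B))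
      = (cpd (k.val+1) B)ᵀ * cpd (k.val+1) (Aᵀ * A) * cpd (k.val+1) B := by
    have h : (A * B)ᵀ * (A * B) = Bᵀ * (Aᵀ * A) * B := by
      rw [Matrix.transpose_mul]
      noncomm_ring
    rw [h, cpd_mul, cpd_mul, cpd_transpose]
  have hc : c = (cpd (k.val+1) B *ᵥ z) ⬝ᵥ (cpd (k.val+1) (Aᵀ * A) *ᵥ (cpd (k.val+1) B *ᵥ z)) := by
    have h0 : c = z ⬝ᵥ (cpd (k.val+1) ((A * B)ᵀ * (A * B)) *ᵥ z) := by
      rw [hz2, dotProduct_smul, hz1, smul_eq_mul, mul_one]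
    rw [h0, hfact, ← Matrix.mulVec_mulVec, ← Matrix.mulVec_mulVec, dot_conj]
  have hyy : (cpd (k.val+1) B *ᵥ z) ⬝ᵥ (cpd (k.val+1) B *ᵥ z)
      = z ⬝ᵥ (cpd (k.val+1) (Bᵀ * B) *ᵥ z) := by
    rw [← dot_conj, Matrix.mulVec_mulVec, ← cpd_transpose, ← cpd_mul]
  have step1 : c ≤ a * ((cpd (k.val+1) B *ᵥ z) ⬝ᵥ (cpd (k.val+1) B *ᵥ z)) := by
    rw [hc]; exact haUp _
  have step2 : (cpd (k.val+1) B *ᵥ z) ⬝ᵥ (cpd (k.val+1) B *ᵥ z) ≤ b := by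
    rw [hyy]
    have h := hbUp z
    rwa [hz1, mul_one] at h
  have hcab : c ≤ a * b := step1.trans (mul_le_mul_of_nonneg_left step2 hapos.le)
  rw [haP, hbP, hcP, ← Real.sqrt_mul hapos.le]
  exact Real.sqrt_le_sqrt hcab

theorem horn_two_sided' (X Q : Matrix (Fin n) (Fin n) ℝ)
    (hX : IsUnit X.det) (hQ : IsUnit Q.det) :
    ∀ k : Fin n,
      (∏ i ∈ Finset.Iic k, svalDesc (X * Q) i ≤
        ∏ i ∈ Finset.Iic k, (svalDesc X i * svalDesc Q i)) ∧
      (∏ i ∈ Finset.Iic k, svalDesc X i ≤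
        ∏ i ∈ Finset.Iic k, (svalDesc (X * Q) i * svalDesc Q⁻¹ i)) := by
  intro k
  constructor
  · rw [Finset.prod_mul_distrib]
    exact master X Q hX hQ k
  · rw [Finset.prod_mul_distrib]
    have hXQ : IsUnit (X * Q).det := by rw [Matrix.det_mul]; exact hX.mul hQ
    have hQi : IsUnit Q⁻¹.det := Q.isUnit_nonsing_inv_det hQ
    have := master (X * Q) Q⁻¹ hXQ hQi k
    rwa [Matrix.mul_nonsing_inv_cancel_right Q X hQ] at this

end HornAux

/-- Two-sided Horn-inequality estimate for X, Q invertible: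
∏ᵢ σᵢ(XQ) ≤ ∏ᵢ σᵢ(X)σᵢ(Q) and ∏ᵢ σᵢ(X) ≤ ∏ᵢ σᵢ(XQ)σᵢ(Q⁻¹). -/
theorem horn_two_sided {n : ℕ} (X Q : Matrix (Fin n) (Fin n) ℝ)
    (hX : IsUnit X.det) (hQ : IsUnit Q.det) :
    ∀ k : Fin n,
      (∏ i ∈ Finset.Iic k, svalDesc (X * Q) i ≤
        ∏ i ∈ Finset.Iic k, (svalDesc X i * svalDesc Q i)) ∧
      (∏ i ∈ Finset.Iic k, svalDesc X i ≤
        ∏ i ∈ Finset.Iic k, (svalDesc (X * Q) i * svalDesc Q⁻¹ i)) :=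
  HornAux.horn_two_sided' X Q hX hQ
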